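/- For every real scale t and every h = (a,b) ∈ ℍ_t: ⟨h, h⟩_t = |a|² − t·|b|² = det([h]_t); consequently ⟨h, h⟩_t = 0 if and only if |a|² = t·|b|², if and only if h is not invertible in ℍ_t (i.e. h has no two-sided ·_t-inverse). Thus {h ∈ ℍ_t : ⟨h,h⟩_t = 0} is exactly the set of non-invertible elements of ℍ_t. -/
import Mathlib


noncomputable section

open ComplexConjugate

/-- The `t`-scaled vector multiplication on `ℂ × ℂ` (the ring `ℍ_t`). -/
def hmul (t : ℝ) (h₁ h₂ : ℂ × ℂ) : ℂ × ℂ :=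
  (h₁.1 * h₂.1 + (t : ℂ) * h₁.2 * conj h₂.2, h₁.1 * h₂.2 + h₁.2 * conj h₂.1)

/-- The realization `π_t : ℍ_t → M₂(ℂ)`. -/
def pit (t : ℝ) (h : ℂ × ℂ) : Matrix (Fin 2) (Fin 2) ℂ :=
  !![h.1, (t : ℂ) * h.2; conj h.2, conj h.1]

/-- The hypercomplex conjugate `(a,b)† = (conj a, -b)`. -/
def hdag (h : ℂ × ℂ) : ℂ × ℂ := (conj h.1, -h.2)

/-- The linear functional `τ((a,b)) = Re a`, composed with `·_t`-multiplication:
the bilinear form `⟨h₁,h₂⟩_t = τ(h₁ ·_t h₂†)`. -/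
def hform (t : ℝ) (h₁ h₂ : ℂ × ℂ) : ℝ := (hmul t h₁ (hdag h₂)).1.re

lemma hform_self (t : ℝ) (a b : ℂ) :
    hform t (a, b) (a, b) = Complex.normSq a - t * Complex.normSq b := by
  simp [hform, hmul, hdag, Complex.normSq_apply]
  ring

lemma det_pit (t : ℝ) (a b : ℂ) :
    Matrix.det (pit t (a, b)) = ((Complex.normSq a - t * Complex.normSq b : ℝ) : ℂ) := by
  simp [pit, Matrix.det_fin_two_of, Complex.ext_iff, Complex.normSq_apply]
  constructor <;> ring

lemma pit_mul (t : ℝ) (h k : ℂ × ℂ) :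
    pit t (hmul t h k) = pit t h * pit t k := by
  ext i j
  fin_cases i <;> fin_cases j <;>
    simp [pit, hmul, Matrix.mul_apply, Fin.sum_univ_two, map_add, map_mul] <;> ring

/-- `⟨h,h⟩_t = |a|² − t|b|² = det([h]_t)`, and `⟨h,h⟩_t = 0` iff
`|a|² = t|b|²` iff `h` is not `·_t`-invertible. -/
theorem form_self_eq_det_and_singularity (t : ℝ) (a b : ℂ) :
    hform t (a, b) (a, b) = Complex.normSq a - t * Complex.normSq b ∧
    ((hform t (a, b) (a, b) : ℝ) : ℂ) = Matrix.det (pit t (a, b)) ∧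
    (hform t (a, b) (a, b) = 0 ↔ Complex.normSq a = t * Complex.normSq b) ∧
    (hform t (a, b) (a, b) = 0 ↔
      ¬∃ k : ℂ × ℂ, hmul t (a, b) k = (1, 0) ∧ hmul t k (a, b) = (1, 0)) := by
  have h1 := hform_self t a b
  refine ⟨h1, by rw [h1, det_pit], by rw [h1]; exact sub_eq_zero, ?_⟩
  rw [h1]
  set D : ℝ := Complex.normSq a - t * Complex.normSq b with hD
  constructor
  · -- D = 0 → no inverse
    rintro h0 ⟨k, hk1, hk2⟩
    have hdet : Matrix.det (pit t (hmul t (a, b) k)) = Matrix.det (pit t (1, 0)) := by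
      rw [hk1]
    rw [pit_mul, Matrix.det_mul, det_pit, ← hD, h0] at hdet
    simp [pit, Matrix.det_fin_two_of] at hdet
  · -- no inverse → D = 0
    intro hni
    by_contra h0
    apply hni
    have hDc : (D : ℂ) ≠ 0 := by exact_mod_cast h0
    have hkey : a * conj a - (t : ℂ) * b * conj b = (D : ℂ) := by
      rw [hD]
      push_cast
      simp [Complex.ext_iff, Complex.normSq_apply]
      constructor <;> ring
    have hca : conj a * a = a * conj a := mul_comm _ _
    refine ⟨(conj a / (D : ℂ), -b / (D : ℂ)), ?_, ?_⟩ <;>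
        simp only [hmul, Prod.mk.injEq, map_div₀, map_neg, Complex.conj_conj,
          Complex.conj_ofReal] <;>
        constructor
    · field_simp
      linear_combination hkey
    · field_simp
      ring
    · field_simp
      linear_combination hkey
    · field_simp
      ring
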